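/- Let G be a monoid and V₁, ..., Vᵣ pairwise non-isomorphic irreducible finite-dimensional complex representations of G. Then their characters χ(V₁), ..., χ(Vᵣ), viewed as functions G → ℂ, are linearly independent. -/

import Mathlib

open CategoryTheory Module

namespace CharLinIndAux

variable {G : Type} [Monoid G]

noncomputable instance (X : FDRep ℂ G) :
    IsScalarTower ℂ (MonoidAlgebra ℂ G) (Representation.asModule X.ρ) :=
  ⟨fun c a x => by
    show (Representation.asAlgebraHom X.ρ) (c • a) x = c • (Representation.asAlgebraHom X.ρ) a x
    rw [map_smul]; rfl⟩

noncomputable instance (X : FDRep ℂ G) :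
    SMulCommClass (MonoidAlgebra ℂ G) ℂ (Representation.asModule X.ρ) :=
  ⟨fun a c x => by
    show (Representation.asAlgebraHom X.ρ) a (c • x) = c • (Representation.asAlgebraHom X.ρ) a x
    exact map_smul _ _ _⟩

noncomputable instance (X : FDRep ℂ G) : FiniteDimensional ℂ (Representation.asModule X.ρ) :=
  inferInstanceAs (FiniteDimensional ℂ X)

section density

variable {k A M : Type} [Field k] [Ring A] [Algebra k A]
  [AddCommGroup M] [Module k M] [Module A M] [IsScalarTower k A M]
  [FiniteDimensional k M]

/-- The action of `a : A` as a `k`-linear endomorphism. -/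
noncomputable def smulEnd [SMulCommClass A k M] (a : A) : M →ₗ[k] M where
  toFun v := a • v
  map_add' := smul_add a
  map_smul' c v := smul_comm a c v

omit [Algebra k A] [IsScalarTower k A M] in
theorem pi_semisimple {ι : Type} [Fintype ι] [DecidableEq ι] (N : ι → Type)
    [∀ i, AddCommGroup (N i)] [∀ i, Module A (N i)] [∀ i, IsSemisimpleModule A (N i)] :
    IsSemisimpleModule A (∀ i, N i) := by
  refine isSemisimpleModule_of_isSemisimpleModule_submodule'
    (p := fun i => LinearMap.range (LinearMap.single A N i)) (fun i => ?_) ?_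
  · exact IsSemisimpleModule.congr
      (LinearEquiv.ofInjective (LinearMap.single A N i) (Pi.single_injective (M := N) i)).symm
  · simp_rw [LinearMap.range_eq_map, Submodule.iSup_map_single, Submodule.pi_top]

/-- Jacobson density for a finite-dimensional semisimple module: any `k`-linear endomorphism
commuting with the commutant is given by the action of an algebra element. -/
theorem density [IsSemisimpleModule A M] [SMulCommClass A k M]
    (f : M →ₗ[k] M)
    (hcomm : ∀ (φ : M →ₗ[A] M) (v : M), f (φ v) = φ (f v)) :
    ∃ a : A, ∀ v, a • v = f v := by
  classical
  set n := finrank k M with hn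
  let b : Basis (Fin n) k M := finBasis k M
  let w : Fin n → M := b
  have : IsSemisimpleModule A (Fin n → M) := pi_semisimple _
  obtain ⟨q, hq⟩ := exists_isCompl (Submodule.span A {w})
  let p : (Fin n → M) →ₗ[A] (Fin n → M) :=
    (Submodule.span A {w}).subtype ∘ₗ Submodule.projectionOnto _ q hq
  have hpw : p w = w := by
    simp only [p, LinearMap.comp_apply]
    rw [Submodule.linearProjOfIsCompl_apply_left hq ⟨w, Submodule.mem_span_singleton_self w⟩]
    rfl
  have hdecomp : ∀ (φ : (Fin n → M) →ₗ[A] (Fin n → M)) (v : Fin n → M) (i : Fin n),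
      φ v i = ∑ j, (LinearMap.proj i ∘ₗ φ ∘ₗ LinearMap.single A (fun _ => M) j) (v j) := by
    intro φ v i
    calc φ v i = φ (∑ j, Pi.single j (v j)) i := by rw [Finset.univ_sum_single]
    _ = _ := by rw [map_sum]; simp [LinearMap.proj, LinearMap.single]; rfl
  have hfp : ∀ v : Fin n → M, (fun i => f (p v i)) = p (fun i => f (v i)) := by
    intro v
    funext i
    rw [hdecomp p v i, hdecomp p (fun i => f (v i)) i, map_sum]
    exact Finset.sum_congr rfl fun j _ => hcomm _ (v j)
  have hfw : (fun i => f (w i)) ∈ Submodule.span A {w} := by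
    have h2 := hfp w
    rw [hpw] at h2
    rw [h2]
    exact (Submodule.projectionOnto _ q hq (fun i => f (w i))).2
  obtain ⟨a, ha⟩ := Submodule.mem_span_singleton.mp hfw
  refine ⟨a, fun v => ?_⟩
  have hba : (smulEnd a : M →ₗ[k] M) = f := by
    apply b.ext
    intro i
    have := congrFun ha i
    simpa [smulEnd, w] using this
  exact congrFun (congrArg (fun g => g.toFun) hba) v

end density

/-- The `G`-action on `(Representation.asModule X.ρ)` by `single g 1` agrees with `X.ρ g`. -/
theorem single_smul_eq (X : FDRep ℂ G) (g : G) (x : (Representation.asModule X.ρ)) :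
    (MonoidAlgebra.single g (1 : ℂ)) • x = X.ρ g x := by
  show (Representation.asAlgebraHom X.ρ) (MonoidAlgebra.single g 1) x = X.ρ g x
  rw [Representation.asAlgebraHom_single_one]

/-- A simple `FDRep` is a nontrivial vector space. -/
theorem nontrivial_of_simple (X : FDRep ℂ G) [Simple X] : Nontrivial X := by
  by_contra h
  have hsub : Subsingleton X := not_nontrivial_iff_subsingleton.mp h
  apply CategoryTheory.id_nonzero X
  apply Action.hom_ext
  apply FGModuleCat.hom_ext
  apply LinearMap.ext
  intro x
  exact @Subsingleton.elim _ hsub _ _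

/-- A simple `FDRep` gives a simple module over the monoid algebra. -/
theorem isSimpleModule_of_simple (X : FDRep ℂ G) [Simple X] :
    IsSimpleModule (MonoidAlgebra ℂ G) (Representation.asModule X.ρ) := by
  have : Nontrivial X := nontrivial_of_simple X
  have : Nontrivial (Representation.asModule X.ρ) := ‹Nontrivial X›
  rw [isSimpleModule_iff]
  constructor
  intro p
  by_cases hp : p = ⊥
  · exact Or.inl hp
  right
  -- construct the subrepresentation on `p`
  let p' : Submodule ℂ (Representation.asModule X.ρ) := p.restrictScalars ℂ
  have hmem : ∀ g : G, ∀ x : (Representation.asModule X.ρ), x ∈ p' → smulEnd (M := (Representation.asModule X.ρ))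
      (MonoidAlgebra.single g (1:ℂ)) x ∈ p' := fun g x hx => p.smul_mem _ hx
  let ρ' : Representation ℂ G ↥p' :=
    { toFun := fun g => (smulEnd (M := (Representation.asModule X.ρ))
        (MonoidAlgebra.single g (1:ℂ))).restrict (fun x hx => hmem g x hx)
      map_one' := by
        apply LinearMap.ext; rintro ⟨x, hx⟩
        apply Subtype.ext
        show (MonoidAlgebra.single (1:G) (1:ℂ)) • x = x
        rw [← MonoidAlgebra.one_def, one_smul]
      map_mul' := by
        intro g h
        apply LinearMap.ext; rintro ⟨x, hx⟩
        apply Subtype.ext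
        show (MonoidAlgebra.single (g * h) (1:ℂ)) • x =
          (MonoidAlgebra.single g (1:ℂ)) • (MonoidAlgebra.single h (1:ℂ)) • x
        rw [← mul_smul, MonoidAlgebra.single_mul_single, one_mul] }
  let Y : FDRep ℂ G := FDRep.of ρ'
  let ι : Y ⟶ X :=
    { hom := FGModuleCat.ofHom (p'.subtype : ↥p' →ₗ[ℂ] (Representation.asModule X.ρ))
      comm := by
        intro g
        apply FGModuleCat.hom_ext
        apply LinearMap.ext; rintro ⟨x, hx⟩
        show (MonoidAlgebra.single g (1:ℂ)) • x = X.ρ g x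
        exact single_smul_eq X g x }
  have hmono : Mono ι := by
    apply ConcreteCategory.mono_of_injective
    exact fun a b h => Subtype.val_injective h
  have hne : ι ≠ 0 := by
    obtain ⟨x, hxp, hx0⟩ : ∃ x ∈ p, x ≠ 0 := by
      by_contra h
      push_neg at h
      exact hp (le_antisymm (fun y hy => by simpa using h y hy) bot_le)
    intro h0
    apply hx0
    have := congrArg (fun φ => φ.hom.hom.hom) h0
    have := LinearMap.congr_fun this ⟨x, hxp⟩
    exact this
  have hiso : IsIso ι := (Simple.mono_isIso_iff_nonzero ι).mpr hne
  have hsurj : Function.Surjective (p'.subtype) := by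
    let e := FDRep.isoToLinearEquiv (asIso ι)
    intro y
    obtain ⟨z, hz⟩ := e.surjective y
    exact ⟨z, by rw [← hz]; rfl⟩
  rw [Submodule.eq_top_iff']
  intro x
  obtain ⟨⟨z, hz⟩, rfl⟩ := hsurj x
  exact hz


/-- Transfer of trace between `X` and `X.ρ.asModule`. -/
noncomputable def asModuleEquivL (X : FDRep ℂ G) : Representation.asModule X.ρ ≃ₗ[ℂ] X :=
  { Representation.asModuleEquiv X.ρ with map_smul' := fun _ _ => rfl }

theorem char_eq_trace (X : FDRep ℂ G) (g : G) :
    X.character g =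
      LinearMap.trace ℂ (Representation.asModule X.ρ)
        (smulEnd (MonoidAlgebra.single g (1 : ℂ))) := by
  rw [← LinearMap.trace_conj' _ (asModuleEquivL X)]
  show LinearMap.trace ℂ _ (X.ρ g) = _
  congr 1
  apply LinearMap.ext
  intro x
  rw [LinearEquiv.conj_apply]
  show X.ρ g x = asModuleEquivL X (MonoidAlgebra.single g (1:ℂ) • (asModuleEquivL X).symm x)
  rw [single_smul_eq]
  rfl

/-- Nonzero `MonoidAlgebra`-linear maps between the modules of two simple non-isomorphic
representations do not exist. -/
theorem asModule_hom_eq_zero (X Y : FDRep ℂ G) [Simple X] [Simple Y] (h : IsEmpty (X ≅ Y))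
    (φ : Representation.asModule X.ρ →ₗ[MonoidAlgebra ℂ G] Representation.asModule Y.ρ) :
    φ = 0 := by
  have hX := isSimpleModule_of_simple X
  have hY := isSimpleModule_of_simple Y
  by_contra hφ
  have hbij := LinearMap.bijective_of_ne_zero hφ
  let e : Representation.asModule X.ρ ≃ₗ[MonoidAlgebra ℂ G] Representation.asModule Y.ρ :=
    LinearEquiv.ofBijective φ hbij
  let e' := e.restrictScalars ℂ
  refine h.elim ?_
  refine { hom := { hom := FGModuleCat.ofHom (e' : Representation.asModule X.ρ →ₗ[ℂ] Representation.asModule Y.ρ),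
                    comm := ?_ },
           inv := { hom := FGModuleCat.ofHom (e'.symm : Representation.asModule Y.ρ →ₗ[ℂ]
                      Representation.asModule X.ρ), comm := ?_ },
           hom_inv_id := ?_, inv_hom_id := ?_ }
  · intro g
    apply FGModuleCat.hom_ext
    apply LinearMap.ext
    intro x
    show e' (X.ρ g x) = Y.ρ g (e' x)
    rw [← single_smul_eq X g x, ← single_smul_eq Y g (e' x)]
    exact e.map_smul _ x
  · intro g
    apply FGModuleCat.hom_ext
    apply LinearMap.ext
    intro y
    show e'.symm (Y.ρ g y) = X.ρ g (e'.symm y)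
    apply e'.injective
    erw [e'.apply_symm_apply]
    have hx : e' (X.ρ g (e'.symm y)) = Y.ρ g (e' (e'.symm y)) := by
      rw [← single_smul_eq X, ← single_smul_eq Y]
      exact e.map_smul _ _
    rw [hx]; erw [e'.apply_symm_apply]
  · apply Action.hom_ext
    apply FGModuleCat.hom_ext
    apply LinearMap.ext
    intro x
    show e'.symm (e' x) = x
    exact e'.symm_apply_apply x
  · apply Action.hom_ext
    apply FGModuleCat.hom_ext
    apply LinearMap.ext
    intro y
    show e' (e'.symm y) = y
    exact e'.apply_symm_apply y

end CharLinIndAux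

open CharLinIndAux

theorem characters_linearIndependent (G : Type) [Monoid G] (r : ℕ)
    (V : Fin r → FDRep ℂ G)
    (hirr : ∀ i, Simple (V i))
    (hne : ∀ i j, i ≠ j → IsEmpty (V i ≅ V j)) :
    LinearIndependent ℂ (fun i => (V i).character) := by
  classical
  have := hirr
  rw [Fintype.linearIndependent_iff]
  intro c hc j
  let A := MonoidAlgebra ℂ G
  let M : Fin r → Type := fun i => Representation.asModule (V i).ρ
  have hsimple : ∀ i, IsSimpleModule A (M i) := fun i => isSimpleModule_of_simple (V i)
  haveI hss : ∀ i, IsSemisimpleModule A (M i) := fun i => by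
    haveI := hsimple i; exact inferInstance
  haveI hN : IsSemisimpleModule A (∀ i, M i) := pi_semisimple M
  -- the coordinatewise projection onto the j-th factor
  let f : (∀ i, M i) →ₗ[ℂ] (∀ i, M i) := LinearMap.single ℂ M j ∘ₗ LinearMap.proj j
  have hcomm : ∀ (φ : (∀ i, M i) →ₗ[A] (∀ i, M i)) (v : ∀ i, M i), f (φ v) = φ (f v) := by
    intro φ v
    have hz : ∀ i l, i ≠ l → (LinearMap.proj i ∘ₗ φ ∘ₗ LinearMap.single A M l) = 0 := by
      intro i l hil
      exact asModule_hom_eq_zero (V l) (V i) (hne l i (Ne.symm hil)) _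
    have hdec : ∀ (w : ∀ i, M i) (i : Fin r),
        φ w i = ∑ l, (LinearMap.proj i ∘ₗ φ ∘ₗ LinearMap.single A M l) (w l) := by
      intro w i
      calc φ w i = φ (∑ l, Pi.single l (w l)) i := by rw [Finset.univ_sum_single]
      _ = _ := by rw [map_sum]; simp [LinearMap.proj, LinearMap.single]; rfl
    funext i
    show Pi.single j (φ v j) i = φ (Pi.single j (v j)) i
    rw [hdec (Pi.single j (v j)) i]
    rw [Finset.sum_eq_single j (fun l _ hl => by
      rw [Pi.single_eq_of_ne hl, map_zero]) (by intro h; exact absurd (Finset.mem_univ j) h)]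
    rw [Pi.single_eq_same]
    by_cases hij : i = j
    · subst hij
      rw [Pi.single_eq_same, hdec v i]
      rw [Finset.sum_eq_single i (fun l _ hl => by
        rw [show (LinearMap.proj i ∘ₗ φ ∘ₗ LinearMap.single A M l) = 0 from
          hz i l (Ne.symm hl), LinearMap.zero_apply])
        (by intro h; exact absurd (Finset.mem_univ i) h)]
    · rw [Pi.single_eq_of_ne hij,
        show (LinearMap.proj i ∘ₗ φ ∘ₗ LinearMap.single A M j) = 0 from hz i j hij,
        LinearMap.zero_apply]
  obtain ⟨a, ha⟩ := density (k := ℂ) f hcomm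
  -- the element `a` acts as the identity on `M j` and as zero on `M i`, `i ≠ j`
  have haj : ∀ x : M j, a • x = x := by
    intro x
    have := congrFun (ha (Pi.single j x)) j
    simpa [f] using this
  have hai : ∀ i, i ≠ j → ∀ x : M i, a • x = 0 := by
    intro i hij x
    have := congrFun (ha (Pi.single i x)) i
    simp only [Pi.smul_apply, Pi.single_eq_same] at this
    rw [this]
    show (Pi.single j (Pi.single i x j) : ∀ i, M i) i = 0
    rw [Pi.single_eq_of_ne (Ne.symm hij), Pi.single_eq_of_ne hij]
    -- `Pi.single j 0 = 0` would also work
  -- the linear functional given by the weighted sum of traces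
  let sm : ∀ i, A →ₗ[ℂ] (M i →ₗ[ℂ] M i) := fun i =>
    { toFun := fun b => smulEnd b
      map_add' := fun b₁ b₂ => by apply LinearMap.ext; intro v; exact add_smul b₁ b₂ v
      map_smul' := fun d b => by apply LinearMap.ext; intro v; exact smul_assoc d b v }
  let T : A →ₗ[ℂ] ℂ := ∑ i, c i • (LinearMap.trace ℂ (M i) ∘ₗ sm i)
  have hT0 : T = 0 := by
    apply MonoidAlgebra.lhom_ext'
    intro g
    apply LinearMap.ext
    intro b
    have hb : (MonoidAlgebra.single g b : A) = b • MonoidAlgebra.single g 1 := by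
      rw [MonoidAlgebra.smul_single', mul_one]
    show T (MonoidAlgebra.single g b) = 0
    rw [hb, map_smul]
    have hTg : T (MonoidAlgebra.single g 1) = 0 := by
      have hsum : T (MonoidAlgebra.single g 1) = ∑ i, c i * (V i).character g := by
        simp only [T, LinearMap.sum_apply, LinearMap.smul_apply, LinearMap.comp_apply]
        refine Finset.sum_congr rfl fun i _ => ?_
        rw [char_eq_trace]
        rfl
      rw [hsum]
      have := congrFun hc g
      simpa using this
    rw [hTg, smul_zero]
  have hTa := congrFun (congrArg (fun (ψ : A →ₗ[ℂ] ℂ) => (ψ : A → ℂ)) hT0) a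
  simp only [LinearMap.zero_apply] at hTa
  have hTa' : T a = c j * (finrank ℂ (M j) : ℂ) := by
    show (∑ i, c i • (LinearMap.trace ℂ (M i) ∘ₗ sm i)) a = _
    rw [LinearMap.sum_apply]
    rw [Finset.sum_eq_single j (fun i _ hij => by
        have : sm i a = 0 := by
          apply LinearMap.ext; intro v; exact hai i hij v
        simp [this])
      (by intro h; exact absurd (Finset.mem_univ j) h)]
    have : sm j a = LinearMap.id := by
      apply LinearMap.ext; intro v; exact haj v
    simp [this, LinearMap.trace_id]
  have h0 : c j * (finrank ℂ (M j) : ℂ) = 0 := by rw [← hTa']; exact hTa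
  have hnt : Nontrivial (M j) := nontrivial_of_simple (V j)
  have hpos : 0 < finrank ℂ (M j) := finrank_pos
  have hne0 : (finrank ℂ (M j) : ℂ) ≠ 0 := Nat.cast_ne_zero.mpr hpos.ne'
  rcases mul_eq_zero.mp h0 with h | h
  · exact h
  · exact absurd h hne0
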